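/- Let E and F be nonzero vector bundles on a smooth projective curve X of genus g with μ(E) ≠ g. If all cohomology groups of pr₁*E ⊗ O_{X×X}(-Δ) ⊗ pr₂*F on X × X vanish, then μ(F) = g + g/(μ(E) - g). -/
import Mathlib


/-- An abstract model of the geometry of a smooth projective curve `X` of genus `g`
over an algebraically closed field: a type of coherent sheaves together with
rank, degree, cohomology dimensions, subsheaf and short-exact-sequence relations,
tensor products, duals, the canonical bundle, trivial bundles, direct sums,
global generation, the kernel of the evaluation map `H⁰(E) ⊗ O_X → E`,
the Fourier functor `F¹₊(E) = R¹pr₂*(O_{X×X}(Δ) ⊗ pr₁*E)`, and the cohomology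
dimensions of `pr₁*E ⊗ O_{X×X}(-Δ) ⊗ pr₂*F` on `X × X`,
satisfying the standard compatibilities (Riemann–Roch, Serre duality,
Künneth/long-exact-sequence estimates, etc.). -/
structure AlgCurve where
  g : ℕ
  Sheaf : Type
  rk : Sheaf → ℕ
  deg : Sheaf → ℤ
  h0 : Sheaf → ℕ
  h1 : Sheaf → ℕ
  /-- `Sub G E` : `G` is a subsheaf of `E`. -/
  Sub : Sheaf → Sheaf → Prop
  /-- `SES A B C` : there is a short exact sequence `0 → A → B → C → 0`. -/
  SES : Sheaf → Sheaf → Sheaf → Prop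
  tensor : Sheaf → Sheaf → Sheaf
  dual : Sheaf → Sheaf
  /-- the canonical bundle `ω_X` -/
  omega : Sheaf
  /-- `triv n` is the trivial bundle `O_X^{⊕ n}` -/
  triv : ℕ → Sheaf
  /-- direct sum of sheaves -/
  dsum : Sheaf → Sheaf → Sheaf
  /-- `gg E` : `E` is globally generated -/
  gg : Sheaf → Prop
  /-- the kernel of the evaluation map `H⁰(E) ⊗ O_X → E` -/
  evKer : Sheaf → Sheaf
  /-- `F¹₊(E) = R¹pr₂*(O_{X×X}(Δ) ⊗ pr₁*E)` -/
  Fplus1 : Sheaf → Sheaf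
  /-- `hBoxMinus E F i = dim H^i(X×X, pr₁*E ⊗ O_{X×X}(-Δ) ⊗ pr₂*F)` -/
  hBoxMinus : Sheaf → Sheaf → ℕ → ℕ
  rk_tensor : ∀ E F, rk (tensor E F) = rk E * rk F
  deg_tensor : ∀ E F, deg (tensor E F) = rk F * deg E + rk E * deg F
  rk_dual : ∀ E, rk (dual E) = rk E
  deg_dual : ∀ E, deg (dual E) = - deg E
  rk_omega : rk omega = 1
  deg_omega : deg omega = 2 * (g : ℤ) - 2
  rk_triv : ∀ n, rk (triv n) = n
  deg_triv : ∀ n, deg (triv n) = 0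
  h0_triv : ∀ n, h0 (triv n) = n
  rk_dsum : ∀ E F, rk (dsum E F) = rk E + rk F
  deg_dsum : ∀ E F, deg (dsum E F) = deg E + deg F
  h0_dsum : ∀ E F, h0 (dsum E F) = h0 E + h0 F
  /-- Riemann–Roch: `χ(E) = deg E + rk E (1 - g)` -/
  riemannRoch : ∀ E, (h0 E : ℤ) - h1 E = deg E + rk E * (1 - (g : ℤ))
  /-- Serre duality: `h¹(E) = h⁰(E^∨ ⊗ ω_X)` -/
  serre : ∀ E, h1 E = h0 (tensor (dual E) omega)
  h0_mono : ∀ E F, Sub E F → h0 E ≤ h0 F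
  sub_tensor : ∀ G E F, Sub G E → Sub (tensor G F) (tensor E F)
  ses_rk : ∀ A B C, SES A B C → rk B = rk A + rk C
  ses_deg : ∀ A B C, SES A B C → deg B = deg A + deg C
  ses_h0 : ∀ A B C, SES A B C → h0 B ≤ h0 A + h0 C
  ses_sub : ∀ A B C, SES A B C → Sub A B
  /-- for globally generated `E`: `0 → K → H⁰(E) ⊗ O_X → E → 0` -/
  evKer_ses : ∀ E, gg E → SES (evKer E) (triv (h0 E)) E
  boxMinus_le0 : ∀ E F, hBoxMinus E F 0 ≤ h0 E * h0 F
  boxMinus_le1 : ∀ E F,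
    hBoxMinus E F 1 ≤ h0 E * h1 F + h1 E * h0 F + h0 (tensor E F)
  boxMinus_le2 : ∀ E F, hBoxMinus E F 2 ≤ h1 E * h1 F + h1 (tensor E F)
  boxMinus_hi : ∀ E F i, 2 < i → hBoxMinus E F i = 0
  boxMinus_euler : ∀ E F,
    ((hBoxMinus E F 0 : ℤ) - hBoxMinus E F 1 + hBoxMinus E F 2)
      = ((h0 E : ℤ) - h1 E) * ((h0 F : ℤ) - h1 F)
        - ((h0 (tensor E F) : ℤ) - h1 (tensor E F))

namespace AlgCurve

variable (C : AlgCurve)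

/-- the slope `μ(E) = deg(E)/rk(E)` -/
def slope (E : C.Sheaf) : ℚ := (C.deg E : ℚ) / (C.rk E : ℚ)

/-- `E` is semistable: every nonzero subsheaf `G ⊆ E` has `μ(G) ≤ μ(E)`. -/
def Semistable (E : C.Sheaf) : Prop :=
  ∀ G, C.Sub G E → 0 < C.rk G → C.slope G ≤ C.slope E

/-- `E` is stable: every proper nonzero subsheaf `G ⊊ E` has `μ(G) < μ(E)`. -/
def Stable (E : C.Sheaf) : Prop :=
  ∀ G, C.Sub G E → 0 < C.rk G → G ≠ E → C.slope G < C.slope E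

end AlgCurve

/-- If `E ⊥_{-Δ} F` (all cohomology of `pr₁*E ⊗ O(-Δ) ⊗ pr₂*F` on `X × X` vanishes)
with `E`, `F` nonzero and `μ(E) ≠ g`, then `μ(F) = g + g/(μ(E) - g)`. -/
theorem stmt2 (C : AlgCurve) (E F : C.Sheaf) (hE : 0 < C.rk E) (hF : 0 < C.rk F)
    (hne : C.slope E ≠ (C.g : ℚ))
    (horth : ∀ i, C.hBoxMinus E F i = 0) :
    C.slope F = C.g + C.g / (C.slope E - C.g) := by
  have key := C.boxMinus_euler E F
  rw [horth 0, horth 1, horth 2] at key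
  rw [C.riemannRoch E, C.riemannRoch F, C.riemannRoch (C.tensor E F),
    C.rk_tensor, C.deg_tensor] at key
  have hr : (C.rk E : ℚ) ≠ 0 := Nat.cast_ne_zero.mpr hE.ne'
  have hs : (C.rk F : ℚ) ≠ 0 := Nat.cast_ne_zero.mpr hF.ne'
  have hne' : C.slope E - (C.g : ℚ) ≠ 0 := sub_ne_zero.mpr hne
  have keyQ : ((C.rk F : ℚ) * C.deg E + (C.rk E : ℚ) * C.deg F
      + (C.rk E : ℚ) * (C.rk F : ℚ) * (1 - (C.g : ℚ)))
      = ((C.deg E : ℚ) + (C.rk E : ℚ) * (1 - (C.g : ℚ)))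
        * ((C.deg F : ℚ) + (C.rk F : ℚ) * (1 - (C.g : ℚ))) := by
    exact_mod_cast sub_eq_zero.mp key.symm |>.symm
  have hab : (C.slope E - (C.g:ℚ)) * (C.slope F - (C.g:ℚ)) = (C.g:ℚ) := by
    unfold AlgCurve.slope
    field_simp
    linear_combination -keyQ
  have h2 : C.slope F - (C.g:ℚ) = (C.g:ℚ) / (C.slope E - (C.g:ℚ)) :=
    (eq_div_iff hne').mpr (by linear_combination hab)
  linarith
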